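/- Let k ≥ 4, and let L: ({0,1}^n)^t → ({0,1})^t be a t-repeated k-non-signaling function that is permutation folded, (1-ε₁)-linear, and (1-ε₂)-consistent. Then the flattening flat(L): {0,1}^n → {0,1} is an (ε₂, t)-almost-non-signaling function that is (1-ε₁-3ε₂)-linear, i.e., for all x, y ∈ {0,1}^n and all query sets S of size at most t containing x, y, x+y, Pr[flat(L)(x) + flat(L)(y) = flat(L)(x+y)] ≥ 1-ε₁-3ε₂ (addition mod 2). -/

import Mathlib

noncomputable def prob {α : Type*} (p : PMF α) (E : Set α) : ℝ :=
  (p.toOuterMeasure E).toReal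

def restrictAssign {D A : Type*} {S T : Finset D} (h : T ⊆ S)
    (f : {x // x ∈ S} → A) : {x // x ∈ T} → A :=
  fun x => f ⟨x.1, h x.2⟩

noncomputable def marginal {D A : Type*} {S : Finset D} (p : PMF ({x // x ∈ S} → A))
    {T : Finset D} (h : T ⊆ S) : PMF ({x // x ∈ T} → A) :=
  p.map (restrictAssign h)

def IsNonSignaling {D A : Type*} [DecidableEq D] (k : ℕ)
    (F : (S : Finset D) → PMF ({x // x ∈ S} → A)) : Prop :=
  ∀ S T : Finset D, S.card ≤ k → T.card ≤ k →
    marginal (F S) (Finset.inter_subset_left : S ∩ T ⊆ S) =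
    marginal (F T) (Finset.inter_subset_right : S ∩ T ⊆ T)

/-- An `(ε, k)`-almost-non-signaling function: marginals on intersections of query
sets of size at most `k` are `ε`-close in total variation distance. -/
def IsAlmostNonSignaling {D A : Type*} [DecidableEq D] (ε : ℝ) (k : ℕ)
    (F : (S : Finset D) → PMF ({x // x ∈ S} → A)) : Prop :=
  ∀ S T : Finset D, S.card ≤ k → T.card ≤ k →
    ∀ E : Set ({x // x ∈ S ∩ T} → A),
      |prob (marginal (F S) (Finset.inter_subset_left : S ∩ T ⊆ S)) E -
       prob (marginal (F T) (Finset.inter_subset_right : S ∩ T ⊆ T)) E| ≤ ε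

def permQ {t : ℕ} {β : Type*} (π : Equiv.Perm (Fin t)) (Q : Fin t → β) : Fin t → β :=
  fun j => Q (π j)

def IsPermFolded {t : ℕ} {D A : Type*} [DecidableEq D] (k : ℕ)
    (F : (S : Finset (Fin t → D)) → PMF ({Q // Q ∈ S} → (Fin t → A))) : Prop :=
  ∀ (ℓ : ℕ) (Q : Fin ℓ → (Fin t → D)) (π : Fin ℓ → Equiv.Perm (Fin t))
    (b : Fin ℓ → (Fin t → A)), ℓ ≤ k →
    prob (F (Finset.image Q Finset.univ))
      {f | ∀ i : Fin ℓ, f ⟨Q i, Finset.mem_image_of_mem _ (Finset.mem_univ i)⟩ = b i} =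
    prob (F (Finset.image (fun i => permQ (π i) (Q i)) Finset.univ))
      {f | ∀ i : Fin ℓ, f ⟨permQ (π i) (Q i),
          Finset.mem_image_of_mem _ (Finset.mem_univ i)⟩ = permQ (π i) (b i)}

def IsConsistentRep {t : ℕ} {D A : Type*} [DecidableEq D] (ε : ℝ)
    (F : (S : Finset (Fin t → D)) → PMF ({Q // Q ∈ S} → (Fin t → A))) : Prop :=
  ∀ Q Q' : Fin t → D,
    prob (F {Q, Q'})
      {f | ∀ j : Fin t, Q j = Q' j →
        f ⟨Q, by simp⟩ j = f ⟨Q', by simp⟩ j} ≥ 1 - ε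

noncomputable def padVec {D : Type*} [Inhabited D] (t : ℕ) (S : Finset D) : Fin t → D :=
  fun j => if h : (j : ℕ) < S.toList.length then S.toList.get ⟨j, h⟩ else default

/-- The flattening of a `t`-repeated non-signaling function: a query set `S` is answered
via a single query to `F` on a vector whose first `S.card` coordinates enumerate `S`. -/
noncomputable def flatten {D A : Type*} [DecidableEq D] [Inhabited D] [Inhabited A] (t : ℕ)
    (F : (S : Finset (Fin t → D)) → PMF ({Q // Q ∈ S} → (Fin t → A)))
    (S : Finset D) : PMF ({x // x ∈ S} → A) :=
  (F {padVec t S}).map (fun f x =>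
    if h : S.toList.idxOf x.1 < t then
      f ⟨padVec t S, Finset.mem_singleton_self _⟩ ⟨S.toList.idxOf x.1, h⟩
    else default)


/-- `(1-ε)`-linearity of a `t`-repeated non-signaling function over `{0,1}^n`. -/
def IsLinearRep {n t : ℕ} (ε : ℝ) (k : ℕ)
    (F : (S : Finset (Fin t → (Fin n → ZMod 2))) → PMF ({Q // Q ∈ S} → (Fin t → ZMod 2))) :
    Prop :=
  ∀ (X Y : Fin t → Fin n → ZMod 2) (S : Finset (Fin t → (Fin n → ZMod 2)))
    (hX : X ∈ S) (hY : Y ∈ S) (hXY : X + Y ∈ S), S.card ≤ k →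
    prob (F S) {f | ∀ j : Fin t, f ⟨X, hX⟩ j + f ⟨Y, hY⟩ j = f ⟨X + Y, hXY⟩ j} ≥ 1 - ε

section ProbLemmas
variable {α : Type*} (p : PMF α)

lemma tom_le_one (E : Set α) : p.toOuterMeasure E ≤ 1 := by
  rw [PMF.toOuterMeasure_apply]
  calc ∑' x, E.indicator p x ≤ ∑' x, p x :=
        ENNReal.tsum_le_tsum fun x => Set.indicator_apply_le fun _ => le_rfl
    _ = 1 := p.tsum_coe

lemma tom_ne_top (E : Set α) : p.toOuterMeasure E ≠ ⊤ :=
  ne_top_of_le_ne_top ENNReal.one_ne_top (tom_le_one p E)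

lemma prob_nonneg' (E : Set α) : 0 ≤ prob p E := ENNReal.toReal_nonneg

lemma prob_le_one (E : Set α) : prob p E ≤ 1 := by
  rw [prob, ← ENNReal.toReal_one]
  exact ENNReal.toReal_mono ENNReal.one_ne_top (tom_le_one p E)

lemma prob_mono {E F : Set α} (h : E ⊆ F) : prob p E ≤ prob p F :=
  ENNReal.toReal_mono (tom_ne_top p F) (p.toOuterMeasure.mono h)

lemma prob_map {β : Type*} (g : α → β) (E : Set β) :
    prob (p.map g) E = prob p (g ⁻¹' E) :=
  congrArg ENNReal.toReal (PMF.toOuterMeasure_map_apply g p E)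

lemma prob_add_compl (E : Set α) : prob p E + prob p Eᶜ = 1 := by
  rw [prob, prob, ← ENNReal.toReal_add (tom_ne_top p E) (tom_ne_top p Eᶜ)]
  rw [PMF.toOuterMeasure_apply, PMF.toOuterMeasure_apply, ← ENNReal.tsum_add]
  have : ∀ x, E.indicator p x + Eᶜ.indicator p x = p x := fun x => by
    by_cases h : x ∈ E <;> simp [Set.indicator_apply, h]
  simp_rw [this, p.tsum_coe, ENNReal.toReal_one]

lemma prob_compl (E : Set α) : prob p Eᶜ = 1 - prob p E := by
  have := prob_add_compl p E; linarith

lemma prob_union_le (E F : Set α) : prob p (E ∪ F) ≤ prob p E + prob p F := by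
  rw [prob, prob, prob, ← ENNReal.toReal_add (tom_ne_top p E) (tom_ne_top p F)]
  refine ENNReal.toReal_mono (by simp [tom_ne_top]) ?_
  exact MeasureTheory.measure_union_le (μ := p.toOuterMeasure) E F

lemma prob_inter_ge (E F : Set α) : prob p E + prob p F - 1 ≤ prob p (E ∩ F) := by
  have h1 : prob p (E ∩ F)ᶜ ≤ prob p Eᶜ + prob p Fᶜ := by
    rw [Set.compl_inter]; exact prob_union_le p _ _
  have h2 := prob_add_compl p (E ∩ F)
  have h3 := prob_add_compl p E
  have h4 := prob_add_compl p F
  linarith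

lemma prob_eq_one (E : Set α) (h : ↑p.support ⊆ E) : prob p E = 1 := by
  rw [prob, (p.toOuterMeasure_apply_eq_one_iff E).2 h, ENNReal.toReal_one]

lemma prob_empty : prob p (∅ : Set α) = 0 := by simp [prob]

lemma prob_pos {E : Set α} {x : α} (hx : x ∈ E) (hs : x ∈ p.support) : 0 < prob p E := by
  refine ENNReal.toReal_pos (fun h0 => ?_) (tom_ne_top p E)
  have hle : p.toOuterMeasure {x} ≤ p.toOuterMeasure E :=
    p.toOuterMeasure.mono (Set.singleton_subset_iff.2 hx)
  rw [PMF.toOuterMeasure_apply_singleton, h0, nonpos_iff_eq_zero] at hle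
  exact (p.mem_support_iff x).1 hs hle

lemma abs_prob_sub_le (A₁ A₂ G : Set α) (h₁ : A₁ ∩ G ⊆ A₂) (h₂ : A₂ ∩ G ⊆ A₁) :
    |prob p A₁ - prob p A₂| ≤ 1 - prob p G := by
  have key : ∀ X Y : Set α, X ∩ G ⊆ Y → prob p X - prob p Y ≤ 1 - prob p G := by
    intro X Y h
    have hX : X ⊆ (X ∩ G) ∪ Gᶜ := by
      intro x hx; by_cases hg : x ∈ G
      · exact Or.inl ⟨hx, hg⟩
      · exact Or.inr hg
    have := (prob_mono p hX).trans (prob_union_le p _ _)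
    have h5 := prob_mono p h
    have h6 := prob_compl p G
    linarith
  rw [abs_sub_le_iff]
  exact ⟨key A₁ A₂ h₁, key A₂ A₁ h₂⟩

end ProbLemmas

open Classical in
noncomputable def extendPerm {α β : Type*} [Fintype α] [Fintype β] [DecidableEq β]
    (f g : α ↪ β) : Equiv.Perm β :=
  (Equiv.Set.sumCompl (Set.range f)).symm.trans <|
    (Equiv.sumCongr ((Equiv.ofInjective f f.injective).symm.trans (Equiv.ofInjective g g.injective))
      (Fintype.equivOfCardEq (by
        rw [Fintype.card_compl_set, Fintype.card_compl_set,
          Fintype.card_range, Fintype.card_range]))).trans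
    (Equiv.Set.sumCompl (Set.range g))

open Classical in
lemma extendPerm_apply {α β : Type*} [Fintype α] [Fintype β] [DecidableEq β]
    (f g : α ↪ β) (a : α) : extendPerm f g (f a) = g a := by
  simp [extendPerm, Equiv.Set.sumCompl_symm_apply_of_mem, Set.mem_range_self]

lemma prob_transfer {D A : Type*} [DecidableEq D] {k : ℕ}
    {F : (S : Finset D) → PMF ({x // x ∈ S} → A)} (hns : IsNonSignaling k F)
    {S T : Finset D} (hS : S.card ≤ k) (hT : T.card ≤ k)
    (E : Set ({x // x ∈ S ∩ T} → A)) :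
    prob (F S) (restrictAssign (Finset.inter_subset_left : S ∩ T ⊆ S) ⁻¹' E) =
    prob (F T) (restrictAssign (Finset.inter_subset_right : S ∩ T ⊆ T) ⁻¹' E) := by
  have h := hns S T hS hT
  calc prob (F S) (restrictAssign Finset.inter_subset_left ⁻¹' E)
      = prob (marginal (F S) Finset.inter_subset_left) E := (prob_map _ _ _).symm
    _ = prob (marginal (F T) Finset.inter_subset_right) E := by rw [h]
    _ = prob (F T) (restrictAssign Finset.inter_subset_right ⁻¹' E) := prob_map _ _ _

lemma fold_as {t : ℕ} {D A : Type*} [DecidableEq D] {k : ℕ}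
    {F : (S : Finset (Fin t → D)) → PMF ({Q // Q ∈ S} → (Fin t → A))}
    (hfold : IsPermFolded k F) (hk : 2 ≤ k) (Q : Fin t → D) (ρ : Equiv.Perm (Fin t))
    (h₁ : Q ∈ Finset.image ![Q, permQ ρ Q] Finset.univ)
    (h₂ : permQ ρ Q ∈ Finset.image ![Q, permQ ρ Q] Finset.univ) :
    ↑(F (Finset.image ![Q, permQ ρ Q] Finset.univ)).support ⊆
      {f | f ⟨permQ ρ Q, h₂⟩ = permQ ρ (f ⟨Q, h₁⟩)} := by
  intro f hf
  by_contra hne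
  simp only [Set.mem_setOf_eq] at hne
  set b₀ := f ⟨Q, h₁⟩ with hb₀
  set b₁ := f ⟨permQ ρ Q, h₂⟩ with hb₁
  have key := hfold 2 ![Q, permQ ρ Q] ![1, ρ⁻¹] ![b₀, b₁] (by omega)
  -- LHS positive
  have hmem : f ∈ {g : {R // R ∈ Finset.image ![Q, permQ ρ Q] Finset.univ} → (Fin t → A) |
      ∀ i : Fin 2, g ⟨![Q, permQ ρ Q] i, Finset.mem_image_of_mem _ (Finset.mem_univ i)⟩
        = ![b₀, b₁] i} := by
    intro i
    fin_cases i
    · exact hb₀.symm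
    · exact hb₁.symm
  have hpos := prob_pos (p := F (Finset.image ![Q, permQ ρ Q] Finset.univ)) hmem hf
  -- RHS zero
  have hempty : {g : {R // R ∈ Finset.image (fun i => permQ (![1, ρ⁻¹] i) (![Q, permQ ρ Q] i))
        Finset.univ} → (Fin t → A) |
      ∀ i : Fin 2, g ⟨permQ (![1, ρ⁻¹] i) (![Q, permQ ρ Q] i),
          Finset.mem_image_of_mem _ (Finset.mem_univ i)⟩ = permQ (![1, ρ⁻¹] i) (![b₀, b₁] i)}
      = (∅ : Set _) := by
    ext g
    simp only [Set.mem_setOf_eq, Set.mem_empty_iff_false, iff_false]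
    intro hg
    have e0 := hg 0
    have e1 := hg 1
    have hq0 : permQ (![1, ρ⁻¹] 0) (![Q, permQ ρ Q] 0) = Q := by
      funext j; simp [permQ]
    have hq1 : permQ (![1, ρ⁻¹] 1) (![Q, permQ ρ Q] 1) = Q := by
      funext j; simp [permQ]
    have hsame : (⟨permQ (![1, ρ⁻¹] 0) (![Q, permQ ρ Q] 0), Finset.mem_image_of_mem _
          (Finset.mem_univ 0)⟩ :
        {R // R ∈ Finset.image (fun i => permQ (![1, ρ⁻¹] i) (![Q, permQ ρ Q] i)) Finset.univ})
        = ⟨permQ (![1, ρ⁻¹] 1) (![Q, permQ ρ Q] 1), Finset.mem_image_of_mem _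
          (Finset.mem_univ 1)⟩ :=
      Subtype.ext (hq0.trans hq1.symm)
    rw [hsame, e1] at e0
    apply hne
    funext j
    have := congrFun e0 (ρ j)
    simp only [Matrix.cons_val_one, Matrix.cons_val_zero, Matrix.head_cons, permQ,
      Equiv.Perm.inv_def, Equiv.symm_apply_apply, Equiv.apply_symm_apply,
      Equiv.Perm.coe_one, id_eq] at this ⊢
    exact this
  rw [key, hempty, prob_empty] at hpos
  exact lt_irrefl _ hpos

lemma indexOf_lt_t {D : Type*} [DecidableEq D] {t : ℕ} {S : Finset D} {a : D}
    (ha : a ∈ S) (hc : S.card ≤ t) : S.toList.idxOf a < t :=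
  lt_of_lt_of_le (List.idxOf_lt_length_iff.2 (Finset.mem_toList.2 ha))
    (by rw [Finset.length_toList]; exact hc)

lemma padVec_get {D : Type*} [Inhabited D] [DecidableEq D] {t : ℕ} {S : Finset D} {a : D}
    (ha : a ∈ S) (h : S.toList.idxOf a < t) : padVec t S ⟨S.toList.idxOf a, h⟩ = a := by
  have hl : S.toList.idxOf a < S.toList.length :=
    List.idxOf_lt_length_iff.2 (Finset.mem_toList.2 ha)
  simp only [padVec]
  rw [dif_pos hl]
  exact List.idxOf_get hl

lemma flatten_linear_part {n t k : ℕ} (ε₁ ε₂ : ℝ)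
    (L : (S : Finset (Fin t → (Fin n → ZMod 2))) → PMF ({Q // Q ∈ S} → (Fin t → ZMod 2)))
    (hk : 4 ≤ k)
    (hns : IsNonSignaling k L)
    (hfold : IsPermFolded k L)
    (hlin : IsLinearRep ε₁ k L)
    (hcons : IsConsistentRep ε₂ L)
    (x y : Fin n → ZMod 2) (S : Finset (Fin n → ZMod 2))
    (hx : x ∈ S) (hy : y ∈ S) (hxy : x + y ∈ S) (hcard : S.card ≤ t) :
    prob (flatten t L S)
      {f | f ⟨x, hx⟩ + f ⟨y, hy⟩ = f ⟨x + y, hxy⟩} ≥ 1 - ε₁ - 3 * ε₂ := by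
  classical
  have hε₂ : 0 ≤ ε₂ := by
    have h := hcons (default : Fin t → Fin n → ZMod 2) default
    have h2 : (1:ℝ) - ε₂ ≤ 1 := le_trans h (prob_le_one _ _)
    linarith
  have hxl : S.toList.idxOf x < t := indexOf_lt_t hx hcard
  have hyl : S.toList.idxOf y < t := indexOf_lt_t hy hcard
  have hzl : S.toList.idxOf (x + y) < t := indexOf_lt_t hxy hcard
  set ix : Fin t := ⟨S.toList.idxOf x, hxl⟩ with hix
  set iy : Fin t := ⟨S.toList.idxOf y, hyl⟩ with hiy
  set iz : Fin t := ⟨S.toList.idxOf (x + y), hzl⟩ with hiz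
  set Q : Fin t → (Fin n → ZMod 2) := padVec t S with hQdef
  have hQx : Q ix = x := padVec_get hx hxl
  have hQy : Q iy = y := padVec_get hy hyl
  have hQz : Q iz = x + y := padVec_get hxy hzl
  set π : Equiv.Perm (Fin t) := Equiv.swap ix iy with hπ
  set σ : Equiv.Perm (Fin t) := Equiv.swap ix iz with hσ
  set Y : Fin t → (Fin n → ZMod 2) := permQ π Q with hY
  set W : Fin t → (Fin n → ZMod 2) := permQ σ Q with hW
  set U : Finset (Fin t → (Fin n → ZMod 2)) := insert Q (insert Y (insert (Q + Y) {W}))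
    with hU
  have hQU : Q ∈ U := Finset.mem_insert_self _ _
  have hYU : Y ∈ U := Finset.mem_insert_of_mem (Finset.mem_insert_self _ _)
  have hZU : Q + Y ∈ U := Finset.mem_insert_of_mem (Finset.mem_insert_of_mem
    (Finset.mem_insert_self _ _))
  have hWU : W ∈ U := Finset.mem_insert_of_mem (Finset.mem_insert_of_mem
    (Finset.mem_insert_of_mem (Finset.mem_singleton_self _)))
  have hUcard : U.card ≤ k := by
    rw [hU]
    have h1 := Finset.card_insert_le Q (insert Y (insert (Q + Y) {W}))
    have h2 := Finset.card_insert_le Y (insert (Q + Y) {W})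
    have h3 := Finset.card_insert_le (Q + Y) ({W} : Finset _)
    have h4 : ({W} : Finset (Fin t → (Fin n → ZMod 2))).card = 1 := Finset.card_singleton _
    omega
  -- events on U
  set A : Set ({R // R ∈ U} → (Fin t → ZMod 2)) :=
    {f | ∀ j : Fin t, f ⟨Q, hQU⟩ j + f ⟨Y, hYU⟩ j = f ⟨Q + Y, hZU⟩ j} with hA
  set B : Set ({R // R ∈ U} → (Fin t → ZMod 2)) :=
    {f | f ⟨Y, hYU⟩ = permQ π (f ⟨Q, hQU⟩)} with hB
  set Dv : Set ({R // R ∈ U} → (Fin t → ZMod 2)) :=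
    {f | f ⟨W, hWU⟩ = permQ σ (f ⟨Q, hQU⟩)} with hD
  set C : Set ({R // R ∈ U} → (Fin t → ZMod 2)) :=
    {f | ∀ j : Fin t, (Q + Y) j = W j → f ⟨Q + Y, hZU⟩ j = f ⟨W, hWU⟩ j} with hC
  have hprobA : prob (L U) A ≥ 1 - ε₁ := hlin Q Y U hQU hYU hZU hUcard
  -- B has probability 1
  have hprobB : prob (L U) B = 1 := by
    have hRV : Q ∈ Finset.image ![Q, permQ π Q] Finset.univ := by
      simpa using Finset.mem_image_of_mem ![Q, permQ π Q] (Finset.mem_univ 0)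
    have hR'V : permQ π Q ∈ Finset.image ![Q, permQ π Q] Finset.univ := by
      simpa using Finset.mem_image_of_mem ![Q, permQ π Q] (Finset.mem_univ 1)
    have hVcard : (Finset.image ![Q, permQ π Q] Finset.univ).card ≤ k :=
      le_trans Finset.card_image_le (by simp; omega)
    have h1 : prob (L (Finset.image ![Q, permQ π Q] Finset.univ))
        {f | f ⟨permQ π Q, hR'V⟩ = permQ π (f ⟨Q, hRV⟩)} = 1 :=
      prob_eq_one _ _ (fold_as hfold (by omega) Q π hRV hR'V)
    have hQm : Q ∈ U ∩ Finset.image ![Q, permQ π Q] Finset.univ :=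
      Finset.mem_inter.2 ⟨hQU, hRV⟩
    have hYm : Y ∈ U ∩ Finset.image ![Q, permQ π Q] Finset.univ :=
      Finset.mem_inter.2 ⟨hYU, hR'V⟩
    have h2 := prob_transfer hns hUcard hVcard
      ({g | g ⟨Y, hYm⟩ = permQ π (g ⟨Q, hQm⟩)} :
        Set ({R // R ∈ U ∩ Finset.image ![Q, permQ π Q] Finset.univ} → (Fin t → ZMod 2)))
    calc prob (L U) B
        = prob (L (Finset.image ![Q, permQ π Q] Finset.univ))
            {f | f ⟨permQ π Q, hR'V⟩ = permQ π (f ⟨Q, hRV⟩)} := h2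
      _ = 1 := h1
  -- D has probability 1
  have hprobD : prob (L U) Dv = 1 := by
    have hRV : Q ∈ Finset.image ![Q, permQ σ Q] Finset.univ := by
      simpa using Finset.mem_image_of_mem ![Q, permQ σ Q] (Finset.mem_univ 0)
    have hR'V : permQ σ Q ∈ Finset.image ![Q, permQ σ Q] Finset.univ := by
      simpa using Finset.mem_image_of_mem ![Q, permQ σ Q] (Finset.mem_univ 1)
    have hVcard : (Finset.image ![Q, permQ σ Q] Finset.univ).card ≤ k :=
      le_trans Finset.card_image_le (by simp; omega)
    have h1 : prob (L (Finset.image ![Q, permQ σ Q] Finset.univ))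
        {f | f ⟨permQ σ Q, hR'V⟩ = permQ σ (f ⟨Q, hRV⟩)} = 1 :=
      prob_eq_one _ _ (fold_as hfold (by omega) Q σ hRV hR'V)
    have hQm : Q ∈ U ∩ Finset.image ![Q, permQ σ Q] Finset.univ :=
      Finset.mem_inter.2 ⟨hQU, hRV⟩
    have hWm : W ∈ U ∩ Finset.image ![Q, permQ σ Q] Finset.univ :=
      Finset.mem_inter.2 ⟨hWU, hR'V⟩
    have h2 := prob_transfer hns hUcard hVcard
      ({g | g ⟨W, hWm⟩ = permQ σ (g ⟨Q, hQm⟩)} :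
        Set ({R // R ∈ U ∩ Finset.image ![Q, permQ σ Q] Finset.univ} → (Fin t → ZMod 2)))
    calc prob (L U) Dv
        = prob (L (Finset.image ![Q, permQ σ Q] Finset.univ))
            {f | f ⟨permQ σ Q, hR'V⟩ = permQ σ (f ⟨Q, hRV⟩)} := h2
      _ = 1 := h1
  -- C has probability ≥ 1 - ε₂
  have hprobC : prob (L U) C ≥ 1 - ε₂ := by
    have hpc : ({Q + Y, W} : Finset (Fin t → (Fin n → ZMod 2))).card ≤ k := by
      have := Finset.card_insert_le (Q + Y) ({W} : Finset _)
      have h4 : ({W} : Finset (Fin t → (Fin n → ZMod 2))).card = 1 := Finset.card_singleton _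
      omega
    have hZm : Q + Y ∈ U ∩ ({Q + Y, W} : Finset _) :=
      Finset.mem_inter.2 ⟨hZU, by simp⟩
    have hWm : W ∈ U ∩ ({Q + Y, W} : Finset _) :=
      Finset.mem_inter.2 ⟨hWU, by simp⟩
    have h2 := prob_transfer hns hUcard hpc
      ({g | ∀ j : Fin t, (Q + Y) j = W j → g ⟨Q + Y, hZm⟩ j = g ⟨W, hWm⟩ j} :
        Set ({R // R ∈ U ∩ ({Q + Y, W} : Finset _)} → (Fin t → ZMod 2)))
    have h1 := hcons (Q + Y) W
    calc prob (L U) C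
        = prob (L {Q + Y, W}) {f | ∀ j : Fin t, (Q + Y) j = W j →
            f ⟨Q + Y, by simp⟩ j = f ⟨W, by simp⟩ j} := h2
      _ ≥ 1 - ε₂ := h1
  -- combine
  set Goal : Set ({R // R ∈ U} → (Fin t → ZMod 2)) :=
    {f | f ⟨Q, hQU⟩ ix + f ⟨Q, hQU⟩ iy = f ⟨Q, hQU⟩ iz} with hGoal
  have hsub : A ∩ (B ∩ (C ∩ Dv)) ⊆ Goal := by
    rintro f ⟨hfA, hfB, hfC, hfD⟩
    have e1 : f ⟨Q, hQU⟩ ix + f ⟨Y, hYU⟩ ix = f ⟨Q + Y, hZU⟩ ix := hfA ix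
    have e2 : f ⟨Y, hYU⟩ ix = f ⟨Q, hQU⟩ iy := by
      have := congrFun hfB ix
      rw [this]
      simp only [permQ, hπ, Equiv.swap_apply_left]
    have e4 : f ⟨W, hWU⟩ ix = f ⟨Q, hQU⟩ iz := by
      have := congrFun hfD ix
      rw [this]
      simp only [permQ, hσ, Equiv.swap_apply_left]
    have e3 : f ⟨Q + Y, hZU⟩ ix = f ⟨W, hWU⟩ ix := by
      apply hfC
      show Q ix + Y ix = W ix
      have hYix : Y ix = y := by
        show Q (π ix) = y
        rw [hπ, Equiv.swap_apply_left, hQy]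
      have hWix : W ix = x + y := by
        show Q (σ ix) = x + y
        rw [hσ, Equiv.swap_apply_left, hQz]
      rw [hQx, hYix, hWix]
    show f ⟨Q, hQU⟩ ix + f ⟨Q, hQU⟩ iy = f ⟨Q, hQU⟩ iz
    rw [← e2, e1, e3, e4]
  have hGoalProb : prob (L U) Goal ≥ 1 - ε₁ - ε₂ := by
    have i1 := prob_inter_ge (L U) C Dv
    have i2 := prob_inter_ge (L U) B (C ∩ Dv)
    have i3 := prob_inter_ge (L U) A (B ∩ (C ∩ Dv))
    have := prob_mono (L U) hsub
    linarith
  -- transfer to the singleton and to flatten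
  have hQs : Q ∈ ({Q} : Finset _) := Finset.mem_singleton_self _
  have hQm : Q ∈ ({Q} : Finset _) ∩ U := Finset.mem_inter.2 ⟨hQs, hQU⟩
  have hscard : ({Q} : Finset (Fin t → (Fin n → ZMod 2))).card ≤ k := by simp; omega
  have htrans := prob_transfer hns hscard hUcard
    ({g | g ⟨Q, hQm⟩ ix + g ⟨Q, hQm⟩ iy = g ⟨Q, hQm⟩ iz} :
      Set ({R // R ∈ ({Q} : Finset _) ∩ U} → (Fin t → ZMod 2)))
  have hsingGoal : prob (L {Q})
      {f | f ⟨Q, hQs⟩ ix + f ⟨Q, hQs⟩ iy = f ⟨Q, hQs⟩ iz} ≥ 1 - ε₁ - ε₂ := by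
    calc prob (L {Q}) {f | f ⟨Q, hQs⟩ ix + f ⟨Q, hQs⟩ iy = f ⟨Q, hQs⟩ iz}
        = prob (L U) Goal := htrans
      _ ≥ 1 - ε₁ - ε₂ := hGoalProb
  -- flatten
  have hflat : prob (flatten t L S) {f | f ⟨x, hx⟩ + f ⟨y, hy⟩ = f ⟨x + y, hxy⟩}
      = prob (L {Q}) {f | f ⟨Q, hQs⟩ ix + f ⟨Q, hQs⟩ iy = f ⟨Q, hQs⟩ iz} := by
    have e1 : prob (flatten t L S) {f | f ⟨x, hx⟩ + f ⟨y, hy⟩ = f ⟨x + y, hxy⟩}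
        = prob (L {Q}) ((fun (f : {R // R ∈ ({Q} : Finset _)} → (Fin t → ZMod 2))
            (a : {v // v ∈ S}) =>
            if h : S.toList.idxOf a.1 < t then
              f ⟨padVec t S, Finset.mem_singleton_self _⟩ ⟨S.toList.idxOf a.1, h⟩
            else default) ⁻¹' {f | f ⟨x, hx⟩ + f ⟨y, hy⟩ = f ⟨x + y, hxy⟩}) :=
      prob_map _ _ _
    rw [e1]
    congr 1
    ext f
    simp only [Set.mem_preimage, Set.mem_setOf_eq]
    rw [dif_pos hxl, dif_pos hyl, dif_pos hzl]
  rw [hflat]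
  linarith

lemma flatten_ans_part {n t k : ℕ} (ε₂ : ℝ)
    (L : (S : Finset (Fin t → (Fin n → ZMod 2))) → PMF ({Q // Q ∈ S} → (Fin t → ZMod 2)))
    (hk : 4 ≤ k)
    (hns : IsNonSignaling k L)
    (hfold : IsPermFolded k L)
    (hcons : IsConsistentRep ε₂ L) :
    IsAlmostNonSignaling ε₂ t (flatten t L) := by
  classical
  intro S T hS hT E
  have hxS : ∀ x : {x // x ∈ S ∩ T}, x.1 ∈ S := fun x => (Finset.mem_inter.1 x.2).1
  have hxT : ∀ x : {x // x ∈ S ∩ T}, x.1 ∈ T := fun x => (Finset.mem_inter.1 x.2).2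
  have hiS : ∀ x : {x // x ∈ S ∩ T}, S.toList.idxOf x.1 < t :=
    fun x => indexOf_lt_t (hxS x) hS
  have hiT : ∀ x : {x // x ∈ S ∩ T}, T.toList.idxOf x.1 < t :=
    fun x => indexOf_lt_t (hxT x) hT
  set iS : {x // x ∈ S ∩ T} → Fin t := fun x => ⟨S.toList.idxOf x.1, hiS x⟩ with hiSdef
  set iT : {x // x ∈ S ∩ T} → Fin t := fun x => ⟨T.toList.idxOf x.1, hiT x⟩ with hiTdef
  have hinjS : Function.Injective iS := by
    intro a b h
    have : S.toList.idxOf a.1 = S.toList.idxOf b.1 := congrArg Fin.val h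
    exact Subtype.ext ((List.idxOf_inj (Finset.mem_toList.2 (hxS a))
      ).1 this)
  have hinjT : Function.Injective iT := by
    intro a b h
    have : T.toList.idxOf a.1 = T.toList.idxOf b.1 := congrArg Fin.val h
    exact Subtype.ext ((List.idxOf_inj (Finset.mem_toList.2 (hxT a))
      ).1 this)
  set τ : Equiv.Perm (Fin t) := extendPerm ⟨iS, hinjS⟩ ⟨iT, hinjT⟩ with hτdef
  have hτ : ∀ x : {x // x ∈ S ∩ T}, τ (iS x) = iT x :=
    fun x => extendPerm_apply ⟨iS, hinjS⟩ ⟨iT, hinjT⟩ x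
  set Qs : Fin t → (Fin n → ZMod 2) := padVec t S with hQsdef
  set R : Fin t → (Fin n → ZMod 2) := padVec t T with hRdef
  have hQsval : ∀ x : {x // x ∈ S ∩ T}, Qs (iS x) = x.1 :=
    fun x => padVec_get (hxS x) (hiS x)
  have hRval : ∀ x : {x // x ∈ S ∩ T}, R (iT x) = x.1 :=
    fun x => padVec_get (hxT x) (hiT x)
  have hagree : ∀ x : {x // x ∈ S ∩ T}, Qs (iS x) = permQ τ R (iS x) := fun x => by
    show Qs (iS x) = R (τ (iS x))
    rw [hQsval, hτ, hRval]
  set U : Finset (Fin t → (Fin n → ZMod 2)) := insert Qs (insert R {permQ τ R}) with hU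
  have hQsU : Qs ∈ U := Finset.mem_insert_self _ _
  have hRU : R ∈ U := Finset.mem_insert_of_mem (Finset.mem_insert_self _ _)
  have hR'U : permQ τ R ∈ U := Finset.mem_insert_of_mem (Finset.mem_insert_of_mem
    (Finset.mem_singleton_self _))
  have hUcard : U.card ≤ k := by
    rw [hU]
    have h1 := Finset.card_insert_le Qs (insert R {permQ τ R})
    have h2 := Finset.card_insert_le R ({permQ τ R} : Finset _)
    have h3 : ({permQ τ R} : Finset (Fin t → (Fin n → ZMod 2))).card = 1 :=
      Finset.card_singleton _
    omega
  -- events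
  set AS : Set ({P // P ∈ U} → (Fin t → ZMod 2)) :=
    {f | (fun x : {x // x ∈ S ∩ T} => f ⟨Qs, hQsU⟩ (iS x)) ∈ E} with hAS
  set AT : Set ({P // P ∈ U} → (Fin t → ZMod 2)) :=
    {f | (fun x : {x // x ∈ S ∩ T} => f ⟨R, hRU⟩ (iT x)) ∈ E} with hAT
  set G1 : Set ({P // P ∈ U} → (Fin t → ZMod 2)) :=
    {f | f ⟨permQ τ R, hR'U⟩ = permQ τ (f ⟨R, hRU⟩)} with hG1
  set G2 : Set ({P // P ∈ U} → (Fin t → ZMod 2)) :=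
    {f | ∀ j : Fin t, Qs j = permQ τ R j → f ⟨Qs, hQsU⟩ j = f ⟨permQ τ R, hR'U⟩ j} with hG2
  -- G1 probability 1
  have hprobG1 : prob (L U) G1 = 1 := by
    have hRV : R ∈ Finset.image ![R, permQ τ R] Finset.univ := by
      simpa using Finset.mem_image_of_mem ![R, permQ τ R] (Finset.mem_univ 0)
    have hR'V : permQ τ R ∈ Finset.image ![R, permQ τ R] Finset.univ := by
      simpa using Finset.mem_image_of_mem ![R, permQ τ R] (Finset.mem_univ 1)
    have hVcard : (Finset.image ![R, permQ τ R] Finset.univ).card ≤ k :=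
      le_trans Finset.card_image_le (by simp; omega)
    have h1 : prob (L (Finset.image ![R, permQ τ R] Finset.univ))
        {f | f ⟨permQ τ R, hR'V⟩ = permQ τ (f ⟨R, hRV⟩)} = 1 :=
      prob_eq_one _ _ (fold_as hfold (by omega) R τ hRV hR'V)
    have hRm : R ∈ U ∩ Finset.image ![R, permQ τ R] Finset.univ :=
      Finset.mem_inter.2 ⟨hRU, hRV⟩
    have hR'm : permQ τ R ∈ U ∩ Finset.image ![R, permQ τ R] Finset.univ :=
      Finset.mem_inter.2 ⟨hR'U, hR'V⟩
    have h2 := prob_transfer hns hUcard hVcard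
      ({g | g ⟨permQ τ R, hR'm⟩ = permQ τ (g ⟨R, hRm⟩)} :
        Set ({P // P ∈ U ∩ Finset.image ![R, permQ τ R] Finset.univ} → (Fin t → ZMod 2)))
    calc prob (L U) G1
        = prob (L (Finset.image ![R, permQ τ R] Finset.univ))
            {f | f ⟨permQ τ R, hR'V⟩ = permQ τ (f ⟨R, hRV⟩)} := h2
      _ = 1 := h1
  -- G2 probability ≥ 1 - ε₂
  have hprobG2 : prob (L U) G2 ≥ 1 - ε₂ := by
    have hpc : ({Qs, permQ τ R} : Finset (Fin t → (Fin n → ZMod 2))).card ≤ k := by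
      have := Finset.card_insert_le Qs ({permQ τ R} : Finset _)
      have h4 : ({permQ τ R} : Finset (Fin t → (Fin n → ZMod 2))).card = 1 :=
        Finset.card_singleton _
      omega
    have hQm : Qs ∈ U ∩ ({Qs, permQ τ R} : Finset _) := Finset.mem_inter.2 ⟨hQsU, by simp⟩
    have hR'm : permQ τ R ∈ U ∩ ({Qs, permQ τ R} : Finset _) :=
      Finset.mem_inter.2 ⟨hR'U, by simp⟩
    have h2 := prob_transfer hns hUcard hpc
      ({g | ∀ j : Fin t, Qs j = permQ τ R j → g ⟨Qs, hQm⟩ j = g ⟨permQ τ R, hR'm⟩ j} :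
        Set ({P // P ∈ U ∩ ({Qs, permQ τ R} : Finset _)} → (Fin t → ZMod 2)))
    have h1 := hcons Qs (permQ τ R)
    calc prob (L U) G2
        = prob (L {Qs, permQ τ R}) {f | ∀ j : Fin t, Qs j = permQ τ R j →
            f ⟨Qs, by simp⟩ j = f ⟨permQ τ R, by simp⟩ j} := h2
      _ ≥ 1 - ε₂ := h1
  -- AS and AT agree on G1 ∩ G2
  have hkey : ∀ f ∈ G1 ∩ G2, (fun x : {x // x ∈ S ∩ T} => f ⟨Qs, hQsU⟩ (iS x))
      = (fun x : {x // x ∈ S ∩ T} => f ⟨R, hRU⟩ (iT x)) := by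
    rintro f ⟨hf1, hf2⟩
    funext x
    have e2 : f ⟨Qs, hQsU⟩ (iS x) = f ⟨permQ τ R, hR'U⟩ (iS x) := hf2 (iS x) (hagree x)
    have e1 : f ⟨permQ τ R, hR'U⟩ (iS x) = f ⟨R, hRU⟩ (τ (iS x)) := congrFun hf1 (iS x)
    rw [e2, e1, hτ]
  have hsub1 : AS ∩ (G1 ∩ G2) ⊆ AT := by
    rintro f ⟨hfAS, hfG⟩
    show (fun x : {x // x ∈ S ∩ T} => f ⟨R, hRU⟩ (iT x)) ∈ E
    rw [← hkey f hfG]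
    exact hfAS
  have hsub2 : AT ∩ (G1 ∩ G2) ⊆ AS := by
    rintro f ⟨hfAT, hfG⟩
    show (fun x : {x // x ∈ S ∩ T} => f ⟨Qs, hQsU⟩ (iS x)) ∈ E
    rw [hkey f hfG]
    exact hfAT
  have habs := abs_prob_sub_le (L U) AS AT (G1 ∩ G2) hsub1 hsub2
  have hg12 := prob_inter_ge (L U) G1 G2
  -- identify the marginals
  have hscardS : ({Qs} : Finset (Fin t → (Fin n → ZMod 2))).card ≤ k := by simp; omega
  have hscardT : ({R} : Finset (Fin t → (Fin n → ZMod 2))).card ≤ k := by simp; omega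
  have hQsm : Qs ∈ ({Qs} : Finset _) ∩ U :=
    Finset.mem_inter.2 ⟨Finset.mem_singleton_self _, hQsU⟩
  have hRm : R ∈ ({R} : Finset _) ∩ U :=
    Finset.mem_inter.2 ⟨Finset.mem_singleton_self _, hRU⟩
  have eS : prob (marginal (flatten t L S) (Finset.inter_subset_left : S ∩ T ⊆ S)) E
      = prob (L U) AS := by
    have e1 : prob (marginal (flatten t L S) (Finset.inter_subset_left : S ∩ T ⊆ S)) E
        = prob (flatten t L S)
          (restrictAssign (Finset.inter_subset_left : S ∩ T ⊆ S) ⁻¹' E) := prob_map _ _ _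
    have e2 : prob (flatten t L S)
          (restrictAssign (Finset.inter_subset_left : S ∩ T ⊆ S) ⁻¹' E)
        = prob (L {Qs}) ((fun (f : {P // P ∈ ({Qs} : Finset _)} → (Fin t → ZMod 2))
            (a : {v // v ∈ S}) =>
            if h : S.toList.idxOf a.1 < t then
              f ⟨padVec t S, Finset.mem_singleton_self _⟩ ⟨S.toList.idxOf a.1, h⟩
            else default) ⁻¹'
            (restrictAssign (Finset.inter_subset_left : S ∩ T ⊆ S) ⁻¹' E)) := prob_map _ _ _
    have e3 : ((fun (f : {P // P ∈ ({Qs} : Finset _)} → (Fin t → ZMod 2))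
            (a : {v // v ∈ S}) =>
            if h : S.toList.idxOf a.1 < t then
              f ⟨padVec t S, Finset.mem_singleton_self _⟩ ⟨S.toList.idxOf a.1, h⟩
            else default) ⁻¹'
            (restrictAssign (Finset.inter_subset_left : S ∩ T ⊆ S) ⁻¹' E))
        = {f : {P // P ∈ ({Qs} : Finset _)} → (Fin t → ZMod 2) |
            (fun x : {x // x ∈ S ∩ T} => f ⟨Qs, Finset.mem_singleton_self _⟩ (iS x)) ∈ E} := by
      ext f
      simp only [Set.mem_preimage, Set.mem_setOf_eq]
      have : (restrictAssign (Finset.inter_subset_left : S ∩ T ⊆ S)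
          (fun (a : {v // v ∈ S}) =>
            if h : S.toList.idxOf a.1 < t then
              f ⟨padVec t S, Finset.mem_singleton_self _⟩ ⟨S.toList.idxOf a.1, h⟩
            else default))
          = (fun x : {x // x ∈ S ∩ T} => f ⟨Qs, Finset.mem_singleton_self _⟩ (iS x)) := by
        funext x
        show (if h : S.toList.idxOf x.1 < t then
              f ⟨padVec t S, Finset.mem_singleton_self _⟩ ⟨S.toList.idxOf x.1, h⟩
            else default) = f ⟨Qs, Finset.mem_singleton_self _⟩ (iS x)
        rw [dif_pos (hiS x)]
      rw [this]
    rw [e1, e2, e3]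
    exact prob_transfer hns hscardS hUcard
      ({g | (fun x : {x // x ∈ S ∩ T} => g ⟨Qs, hQsm⟩ (iS x)) ∈ E} :
        Set ({P // P ∈ ({Qs} : Finset _) ∩ U} → (Fin t → ZMod 2)))
  have eT : prob (marginal (flatten t L T) (Finset.inter_subset_right : S ∩ T ⊆ T)) E
      = prob (L U) AT := by
    have e1 : prob (marginal (flatten t L T) (Finset.inter_subset_right : S ∩ T ⊆ T)) E
        = prob (flatten t L T)
          (restrictAssign (Finset.inter_subset_right : S ∩ T ⊆ T) ⁻¹' E) := prob_map _ _ _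
    have e2 : prob (flatten t L T)
          (restrictAssign (Finset.inter_subset_right : S ∩ T ⊆ T) ⁻¹' E)
        = prob (L {R}) ((fun (f : {P // P ∈ ({R} : Finset _)} → (Fin t → ZMod 2))
            (a : {v // v ∈ T}) =>
            if h : T.toList.idxOf a.1 < t then
              f ⟨padVec t T, Finset.mem_singleton_self _⟩ ⟨T.toList.idxOf a.1, h⟩
            else default) ⁻¹'
            (restrictAssign (Finset.inter_subset_right : S ∩ T ⊆ T) ⁻¹' E)) := prob_map _ _ _
    have e3 : ((fun (f : {P // P ∈ ({R} : Finset _)} → (Fin t → ZMod 2))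
            (a : {v // v ∈ T}) =>
            if h : T.toList.idxOf a.1 < t then
              f ⟨padVec t T, Finset.mem_singleton_self _⟩ ⟨T.toList.idxOf a.1, h⟩
            else default) ⁻¹'
            (restrictAssign (Finset.inter_subset_right : S ∩ T ⊆ T) ⁻¹' E))
        = {f : {P // P ∈ ({R} : Finset _)} → (Fin t → ZMod 2) |
            (fun x : {x // x ∈ S ∩ T} => f ⟨R, Finset.mem_singleton_self _⟩ (iT x)) ∈ E} := by
      ext f
      simp only [Set.mem_preimage, Set.mem_setOf_eq]
      have : (restrictAssign (Finset.inter_subset_right : S ∩ T ⊆ T)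
          (fun (a : {v // v ∈ T}) =>
            if h : T.toList.idxOf a.1 < t then
              f ⟨padVec t T, Finset.mem_singleton_self _⟩ ⟨T.toList.idxOf a.1, h⟩
            else default))
          = (fun x : {x // x ∈ S ∩ T} => f ⟨R, Finset.mem_singleton_self _⟩ (iT x)) := by
        funext x
        show (if h : T.toList.idxOf x.1 < t then
              f ⟨padVec t T, Finset.mem_singleton_self _⟩ ⟨T.toList.idxOf x.1, h⟩
            else default) = f ⟨R, Finset.mem_singleton_self _⟩ (iT x)
        rw [dif_pos (hiT x)]
      rw [this]
    rw [e1, e2, e3]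
    exact prob_transfer hns hscardT hUcard
      ({g | (fun x : {x // x ∈ S ∩ T} => g ⟨R, hRm⟩ (iT x)) ∈ E} :
        Set ({P // P ∈ ({R} : Finset _) ∩ U} → (Fin t → ZMod 2)))
  rw [eS, eT]
  linarith

/-- for `k ≥ 4`, the flattening of a permutation-folded, `(1-ε₁)`-linear,
`(1-ε₂)`-consistent `t`-repeated `k`-non-signaling function over `{0,1}^n` is an
`(ε₂, t)`-almost-non-signaling function that is `(1-ε₁-3ε₂)`-linear. -/
theorem flatten_linear {n t k : ℕ} (ε₁ ε₂ : ℝ)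
    (L : (S : Finset (Fin t → (Fin n → ZMod 2))) → PMF ({Q // Q ∈ S} → (Fin t → ZMod 2)))
    (hk : 4 ≤ k)
    (hns : IsNonSignaling k L)
    (hfold : IsPermFolded k L)
    (hlin : IsLinearRep ε₁ k L)
    (hcons : IsConsistentRep ε₂ L) :
    IsAlmostNonSignaling ε₂ t (flatten t L) ∧
      (∀ (x y : Fin n → ZMod 2) (S : Finset (Fin n → ZMod 2))
        (hx : x ∈ S) (hy : y ∈ S) (hxy : x + y ∈ S), S.card ≤ t →
        prob (flatten t L S)
          {f | f ⟨x, hx⟩ + f ⟨y, hy⟩ = f ⟨x + y, hxy⟩} ≥ 1 - ε₁ - 3 * ε₂) := by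
  refine ⟨flatten_ans_part ε₂ L hk hns hfold hcons, ?_⟩
  intro x y S hx hy hxy hcard
  exact flatten_linear_part ε₁ ε₂ L hk hns hfold hlin hcons x y S hx hy hxy hcard
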